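/- (Prox–SGD one-step bound, deterministic specialization) Let f be L-smooth and convex, ψ convex lsc, F = f + ψ. For 0 < η ≤ 1/L, let x_+ = Prox_{ηψ}[y - η ∇f(y)] and write g̃ = (y - x_+)/η. Then F(x_+) ≤ f(y) + ⟨g̃ - ψ'(x_+), x_+ - y⟩ + (L/2)‖x_+ - y‖² + ψ(x_+) ≤ l(y) + (Lη²/2 - η)‖g̃‖², where ψ'(x_+) = g̃ - ∇f(y) ∈ ∂ψ(x_+) and l(y) = f(y) + ψ(x_+) + ⟨ψ'(x_+), y - x_+⟩. -/

import Mathlib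

open RealInnerProductSpace

lemma descent_aux {p : ℕ} (f : EuclideanSpace ℝ (Fin p) → ℝ)
    (f' : EuclideanSpace ℝ (Fin p) → EuclideanSpace ℝ (Fin p))
    (L : ℝ) (hL0 : 0 ≤ L) (hf : ∀ x, HasGradientAt f (f' x) x)
    (hlip : LipschitzWith L.toNNReal f') (y x : EuclideanSpace ℝ (Fin p)) :
    f x ≤ f y + ⟪f' y, x - y⟫ + L / 2 * ‖x - y‖ ^ 2 := by
  set v := x - y with hv
  set h : ℝ → ℝ := fun t => f (y + t • v) - t * ⟪f' y, v⟫ - L / 2 * t ^ 2 * ‖v‖ ^ 2 with hh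
  have hc : ∀ t : ℝ, HasDerivAt (fun s : ℝ => y + s • v) v t := by
    intro t
    simpa using ((hasDerivAt_id t).smul_const v).const_add y
  have hd : ∀ t : ℝ, HasDerivAt h (⟪f' (y + t • v), v⟫ - ⟪f' y, v⟫ - L * t * ‖v‖ ^ 2) t := by
    intro t
    have h1 : HasDerivAt (fun s : ℝ => f (y + s • v)) ⟪f' (y + t • v), v⟫ t := by
      have := ((hf (y + t • v)).hasFDerivAt).comp_hasDerivAt t (hc t)
      simpa [InnerProductSpace.toDual_apply_apply, Function.comp_def] using this
    have h2 : HasDerivAt (fun s : ℝ => s * ⟪f' y, v⟫) ⟪f' y, v⟫ t := by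
      simpa using (hasDerivAt_id t).mul_const ⟪f' y, v⟫
    have h3 : HasDerivAt (fun s : ℝ => L / 2 * s ^ 2 * ‖v‖ ^ 2) (L * t * ‖v‖ ^ 2) t := by
      have := ((hasDerivAt_pow 2 t).const_mul (L / 2)).mul_const (‖v‖ ^ 2)
      rw [show L * t * ‖v‖ ^ 2 = L / 2 * ((2:ℕ) * t ^ (2 - 1)) * ‖v‖ ^ 2 by push_cast; ring]
      exact this
    exact (h1.sub h2).sub h3
  have hanti : AntitoneOn h (Set.Icc 0 1) := by
    apply antitoneOn_of_deriv_nonpos (convex_Icc 0 1)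
    · exact (fun t _ => ((hd t).differentiableAt).continuousAt.continuousWithinAt)
    · intro t ht
      exact ((hd t).differentiableAt).differentiableWithinAt
    · intro t ht
      rw [interior_Icc] at ht
      rw [(hd t).deriv]
      have hb : ⟪f' (y + t • v) - f' y, v⟫ ≤ L * t * ‖v‖ ^ 2 := by
        calc ⟪f' (y + t • v) - f' y, v⟫ ≤ ‖f' (y + t • v) - f' y‖ * ‖v‖ :=
              real_inner_le_norm _ _
          _ ≤ (L * (t * ‖v‖)) * ‖v‖ := by
              apply mul_le_mul_of_nonneg_right _ (norm_nonneg _)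
              have := hlip.dist_le_mul (y + t • v) y
              rw [Real.coe_toNNReal L hL0] at this
              simpa [dist_eq_norm, norm_smul, abs_of_pos ht.1] using this
          _ = L * t * ‖v‖ ^ 2 := by ring
      rw [inner_sub_left] at hb
      linarith
  have := hanti (Set.mem_Icc.2 ⟨le_refl 0, zero_le_one⟩)
    (Set.mem_Icc.2 ⟨zero_le_one, le_refl 1⟩) zero_le_one
  simp only [hh, one_smul, zero_smul, add_zero, one_pow, zero_pow, mul_zero, zero_mul,
    sub_zero, mul_one] at this
  have hx : y + v = x := by simp [hv]
  rw [hx] at this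
  linarith

theorem stmt17 {p : ℕ}
    (f ψ : EuclideanSpace ℝ (Fin p) → ℝ)
    (f' : EuclideanSpace ℝ (Fin p) → EuclideanSpace ℝ (Fin p))
    (L η : ℝ) (y xplus ψ'v : EuclideanSpace ℝ (Fin p))
    (hf : ∀ x, HasGradientAt f (f' x) x)
    (hL0 : 0 ≤ L) (hlip : LipschitzWith L.toNNReal f')
    (hconv : ConvexOn ℝ Set.univ f) (hψ : ConvexOn ℝ Set.univ ψ)
    (hη : 0 < η) (hηL : η ≤ 1 / L)
    (hprox : ∀ z, η * ψ xplus + ‖xplus - (y - η • f' y)‖ ^ 2 / 2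
        ≤ η * ψ z + ‖z - (y - η • f' y)‖ ^ 2 / 2)
    (gt : EuclideanSpace ℝ (Fin p)) (hgt : gt = (1 / η) • (y - xplus))
    (hψ'def : ψ'v = gt - f' y)
    (hψ'sub : ∀ z, ψ xplus + ⟪ψ'v, z - xplus⟫ ≤ ψ z) :
    f xplus + ψ xplus
      ≤ f y + ⟪gt - ψ'v, xplus - y⟫ + L / 2 * ‖xplus - y‖ ^ 2 + ψ xplus ∧
    f y + ⟪gt - ψ'v, xplus - y⟫ + L / 2 * ‖xplus - y‖ ^ 2 + ψ xplus
      ≤ (f y + ψ xplus + ⟪ψ'v, y - xplus⟫) + (L * η ^ 2 / 2 - η) * ‖gt‖ ^ 2 := by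
  have hfy : gt - ψ'v = f' y := by rw [hψ'def]; abel
  have hyx : y - xplus = η • gt := by
    rw [hgt, smul_smul, mul_one_div, div_self hη.ne', one_smul]
  have hxy : xplus - y = -(η • gt) := by rw [← hyx]; abel
  constructor
  · rw [hfy]
    have := descent_aux f f' L hL0 hf hlip y xplus
    linarith
  · rw [hfy, hψ'def, hxy, hyx]
    have h1 : ⟪f' y, -(η • gt)⟫ = -(η * ⟪f' y, gt⟫) := by
      rw [inner_neg_right, real_inner_smul_right]
    have h2 : ⟪gt - f' y, η • gt⟫ = η * (‖gt‖ ^ 2 - ⟪f' y, gt⟫) := by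
      rw [real_inner_smul_right, inner_sub_left, real_inner_self_eq_norm_sq,
        real_inner_comm]
    have h3 : ‖(-(η • gt) : EuclideanSpace ℝ (Fin p))‖ ^ 2 = η ^ 2 * ‖gt‖ ^ 2 := by
      rw [norm_neg, norm_smul, mul_pow, Real.norm_eq_abs, sq_abs]
    rw [h1, h2, h3]
    ring_nf
    linarith [le_refl (0:ℝ)]
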